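/- Let γ ∈ (0, 1/2), R(γ) = 2γ(1-γ)/(1-2γ), and ε > 0. Suppose each expert's competence satisfies p_i ∈ (γ, 1-γ) and each peers' majority competence satisfies r_i ≥ 1/2 + 1/(2 + ε·R(γ)). Then Σ_{i=1}^N | log(p_i/(1-p_i)) - log(p̃_i/(1-p̃_i)) | ≤ εN/2, where p̃_i = p_i r_i + (1-p_i)(1-r_i). -/

import Mathlib

lemma logodds_lipschitz (γ : ℝ) (hγ0 : 0 < γ) (hγ2 : γ < 1/2)
    (x y : ℝ) (hx : x ∈ Set.Icc γ (1-γ)) (hy : y ∈ Set.Icc γ (1-γ)) :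
    |(Real.log x - Real.log (1-x)) - (Real.log y - Real.log (1-y))|
      ≤ (1/(γ*(1-γ))) * |x - y| := by
  have hconv : Convex ℝ (Set.Icc γ (1-γ)) := convex_Icc _ _
  have key := hconv.norm_image_sub_le_of_norm_hasDerivWithin_le
    (f := fun t => Real.log t - Real.log (1-t))
    (f' := fun t => t⁻¹ + (1-t)⁻¹) (C := 1/(γ*(1-γ)))
    (fun t ht => by
      have ht0 : 0 < t := lt_of_lt_of_le hγ0 ht.1
      have ht1 : 0 < 1 - t := by have := ht.2; linarith
      have h1 : HasDerivAt (fun t : ℝ => Real.log t) t⁻¹ t :=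
        Real.hasDerivAt_log ht0.ne'
      have h2 : HasDerivAt (fun t : ℝ => Real.log (1-t)) ((-1)/(1-t)) t :=
        HasDerivAt.log ((hasDerivAt_id t).const_sub 1) ht1.ne'
      have := h1.sub h2
      have heq : t⁻¹ - (-1)/(1-t) = t⁻¹ + (1-t)⁻¹ := by
        field_simp
        ring
      rw [heq] at this
      exact this.hasDerivWithinAt)
    (fun t ht => by
      have ht0 : 0 < t := lt_of_lt_of_le hγ0 ht.1
      have ht1 : 0 < 1 - t := by have := ht.2; linarith
      have hpos : 0 < t⁻¹ + (1-t)⁻¹ := by positivity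
      rw [Real.norm_eq_abs, abs_of_pos hpos]
      have hsum : t⁻¹ + (1-t)⁻¹ = 1/(t*(1-t)) := by
        field_simp
        ring
      rw [hsum]
      apply one_div_le_one_div_of_le (by nlinarith)
      nlinarith [ht.1, ht.2])
    hy hx
  simpa [Real.norm_eq_abs] using key

lemma key_bound (γ ε : ℝ) (hγ0 : 0 < γ) (hγ2 : γ < 1/2) (hε : 0 < ε)
    (x r : ℝ) (hx1 : γ < x) (hx2 : x < 1 - γ)
    (hr : r ≥ 1/2 + 1 / (2 + ε * (2*γ*(1-γ) / (1 - 2*γ)))) (hr1 : r ≤ 1) :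
    |Real.log (x / (1 - x)) -
        Real.log ((x * r + (1 - x) * (1 - r)) /
          (1 - (x * r + (1 - x) * (1 - r))))| ≤ ε / 2 := by
  set R : ℝ := 2*γ*(1-γ) / (1 - 2*γ) with hRdef
  have h2γ : 0 < 1 - 2*γ := by linarith
  have hR : 0 < R := by
    apply div_pos (by nlinarith) h2γ
  have hD : 0 < 2 + ε * R := by nlinarith
  have hrhalf : (1:ℝ)/2 ≤ r := by
    have : 0 < 1 / (2 + ε * R) := by positivity
    linarith [hr]
  set y : ℝ := x * r + (1 - x) * (1 - r) with hydef
  have hy1 : γ ≤ y := by nlinarith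
  have hy2 : y ≤ 1 - γ := by nlinarith
  have hx0 : 0 < x := lt_trans hγ0 hx1
  have h1x : 0 < 1 - x := by linarith
  have hy0 : 0 < y := lt_of_lt_of_le hγ0 hy1
  have h1y : 0 < 1 - y := by linarith [hy2]
  rw [Real.log_div hx0.ne' h1x.ne', Real.log_div hy0.ne' h1y.ne']
  have hlip := logodds_lipschitz γ hγ0 hγ2 x y
    ⟨le_of_lt hx1, le_of_lt hx2⟩ ⟨hy1, hy2⟩
  refine le_trans hlip ?_
  -- |x - y| ≤ (1-r)*(1-2γ)
  have hxy : x - y = (1-r)*(2*x-1) := by rw [hydef]; ring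
  have habs : |x - y| ≤ (1-r)*(1-2*γ) := by
    rw [hxy, abs_mul, abs_of_nonneg (by linarith : (0:ℝ) ≤ 1-r)]
    apply mul_le_mul_of_nonneg_left _ (by linarith)
    rw [abs_le]; constructor <;> linarith
  have hC : 0 < 1/(γ*(1-γ)) := by
    have : 0 < 1 - γ := by linarith
    positivity
  have h1r : 1 - r ≤ ε*R/(2*(2+ε*R)) := by
    have h12 : (1:ℝ)/2 - 1/(2+ε*R) = ε*R/(2*(2+ε*R)) := by
      field_simp
      ring
    linarith [hr, h12.ge, h12.le]
  have step1 : 1/(γ*(1-γ)) * |x - y| ≤ 1/(γ*(1-γ)) * ((1-r)*(1-2*γ)) :=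
    mul_le_mul_of_nonneg_left habs hC.le
  refine le_trans step1 ?_
  have hgpos : 0 < γ*(1-γ) := by nlinarith
  have hRval : R * (1 - 2*γ) = 2*γ*(1-γ) := by
    rw [hRdef]; field_simp
  have h1r' : (1-r)*(1-2*γ) ≤ ε*(γ*(1-γ))/(2+ε*R) := by
    have := mul_le_mul_of_nonneg_right h1r (by linarith : (0:ℝ) ≤ 1-2*γ)
    refine le_trans this ?_
    rw [div_mul_eq_mul_div, div_le_div_iff₀ (by positivity) hD]
    have heq : ε * R * (1-2*γ) * (2+ε*R) = ε*(γ*(1-γ))*(2*(2+ε*R)) := by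
      linear_combination (ε*(2+ε*R)) * hRval
    linarith
  calc 1/(γ*(1-γ)) * ((1-r)*(1-2*γ)) ≤ 1/(γ*(1-γ)) * (ε*(γ*(1-γ))/(2+ε*R)) :=
        mul_le_mul_of_nonneg_left h1r' hC.le
    _ = ε/(2+ε*R) := by field_simp; exact div_self (ne_of_gt (by linarith))
    _ ≤ ε/2 := by
        apply div_le_div_of_nonneg_left hε.le (by norm_num) (by nlinarith)

theorem stmt_9 (N : ℕ) (γ ε : ℝ) (hγ : γ ∈ Set.Ioo (0:ℝ) (1/2)) (hε : 0 < ε)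
    (p r : Fin N → ℝ)
    (hp : ∀ i, p i ∈ Set.Ioo γ (1 - γ))
    (hr : ∀ i, r i ≥ 1/2 + 1 / (2 + ε * (2*γ*(1-γ) / (1 - 2*γ))))
    (hr1 : ∀ i, r i ≤ 1) :
    ∑ i, |Real.log (p i / (1 - p i)) -
        Real.log ((p i * r i + (1 - p i) * (1 - r i)) /
          (1 - (p i * r i + (1 - p i) * (1 - r i))))| ≤ ε * N / 2 := by
  calc ∑ i, |Real.log (p i / (1 - p i)) -
        Real.log ((p i * r i + (1 - p i) * (1 - r i)) /
          (1 - (p i * r i + (1 - p i) * (1 - r i))))|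
      ≤ ∑ _i : Fin N, ε / 2 := by
        apply Finset.sum_le_sum
        intro i _
        exact key_bound γ ε hγ.1 hγ.2 hε (p i) (r i) (hp i).1 (hp i).2 (hr i) (hr1 i)
    _ = ε * N / 2 := by
        simp [Finset.sum_const, Finset.card_univ]
        ring
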